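/- Let M be a weight sequence satisfying log-convexity (M.1), let m ∈ ℤ_{>0}, and suppose (a_p)_{p∈ℕ} is a complex sequence such that for every n ∈ ℕ, sup_p n^p |a_p| / (p!·M_p^m) < ∞. Define b_p = (mj)!/j! · a_j if p = mj for some j ∈ ℕ, and b_p = 0 otherwise. Then for every n ∈ ℕ, sup_p n^p |b_p| / (p!·M_p) < ∞. -/

import Mathlib

open Filter

theorem stmt_4 (M : ℕ → ℝ) (hpos : ∀ p, 0 < M p)
    (hws : Tendsto (fun p : ℕ => (M p) ^ ((p : ℝ)⁻¹)) atTop atTop)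
    (hM1 : ∀ p : ℕ, 1 ≤ p → (M p) ^ 2 ≤ M (p - 1) * M (p + 1))
    (m : ℕ) (hm : 0 < m) (a : ℕ → ℂ)
    (ha : ∀ n : ℕ, ∃ C : ℝ, ∀ p : ℕ,
      (n : ℝ) ^ p * ‖a p‖ / ((p.factorial : ℝ) * (M p) ^ m) ≤ C)
    (b : ℕ → ℂ)
    (hb : ∀ p : ℕ, b p = if m ∣ p then
      ((p.factorial : ℂ) / ((p / m).factorial : ℂ)) * a (p / m) else 0) :
    ∀ n : ℕ, ∃ C : ℝ, ∀ p : ℕ,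
      (n : ℝ) ^ p * ‖b p‖ / ((p.factorial : ℝ) * M p) ≤ C := by
  have hr : Monotone (fun p : ℕ => M (p + 1) / M p) := by
    apply monotone_nat_of_le_succ
    intro p
    rw [div_le_div_iff₀ (hpos p) (hpos (p + 1))]
    have h := hM1 (p + 1) (by omega)
    simp only [Nat.add_sub_cancel] at h
    nlinarith [h]
  have key : ∀ i j : ℕ, M i * M j ≤ M 0 * M (i + j) := by
    intro i
    induction i with
    | zero => intro j; simp
    | succ i ih =>
      intro j
      have h1 := ih j
      have h2 : M (i + 1) / M i ≤ M (i + j + 1) / M (i + j) := hr (by omega : i ≤ i + j)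
      rw [div_le_div_iff₀ (hpos i) (hpos (i + j))] at h2
      have e : i + 1 + j = i + j + 1 := by omega
      rw [e]
      nlinarith [hpos i, hpos j, hpos (i + j), hpos (i + j + 1), hpos 0, hpos (i + 1),
        mul_le_mul_of_nonneg_right h2 (mul_pos (hpos j) (hpos 0)).le,
        mul_le_mul_of_nonneg_right h1 (mul_pos (hpos i) (hpos (i + j + 1))).le]
  have hpow : ∀ k : ℕ, 1 ≤ k → ∀ j : ℕ, M j ^ k ≤ M 0 ^ (k - 1) * M (k * j) := by
    intro k hk
    induction k, hk using Nat.le_induction with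
    | base => intro j; simp
    | succ k hk ih =>
      intro j
      have h1 := ih j
      have h2 := key j (k * j)
      have e1 : j + k * j = (k + 1) * j := by ring
      have e2 : M 0 ^ (k - 1) * M 0 = M 0 ^ k := by
        rw [← pow_succ]; congr 1; omega
      calc M j ^ (k + 1) = M j ^ k * M j := by ring
        _ ≤ (M 0 ^ (k - 1) * M (k * j)) * M j :=
            mul_le_mul_of_nonneg_right h1 (hpos j).le
        _ ≤ M 0 ^ (k - 1) * (M 0 * M (j + k * j)) := by
            rw [mul_assoc]
            refine mul_le_mul_of_nonneg_left ?_ (pow_nonneg (hpos 0).le _)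
            calc M (k * j) * M j = M j * M (k * j) := by ring
              _ ≤ M 0 * M (j + k * j) := key j (k * j)
        _ = M 0 ^ k * M ((k + 1) * j) := by rw [e1, ← mul_assoc, e2]
        _ = M 0 ^ (k + 1 - 1) * M ((k + 1) * j) := by norm_num
  intro n
  obtain ⟨C, hC⟩ := ha (n ^ m)
  have hC0 : 0 ≤ C := by
    refine le_trans ?_ (hC 0)
    have h1 : (0:ℝ) < (Nat.factorial 0 : ℝ) * M 0 ^ m :=
      mul_pos (by positivity) (pow_pos (hpos 0) m)
    positivity
  refine ⟨M 0 ^ (m - 1) * C, ?_⟩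
  intro p
  rw [hb p]
  by_cases hd : m ∣ p
  · rw [if_pos hd]
    set j := p / m with hj
    have hpj : m * j = p := Nat.mul_div_cancel' hd
    rw [norm_mul, norm_div]
    simp only [Complex.norm_natCast]
    have hfp : (0:ℝ) < p.factorial := by positivity
    have hfj : (0:ℝ) < j.factorial := by positivity
    set A := ‖a j‖ with hA
    have hA0 : 0 ≤ A := norm_nonneg _
    have hMp := hpos p
    have hLHS : (n : ℝ) ^ p * ((p.factorial : ℝ) / (j.factorial : ℝ) * A) /
        ((p.factorial : ℝ) * M p) = (n : ℝ) ^ p * A / ((j.factorial : ℝ) * M p) := by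
      field_simp
    rw [hLHS]
    have hCj := hC j
    have hcast : ((n ^ m : ℕ) : ℝ) ^ j = (n : ℝ) ^ p := by
      push_cast
      rw [← pow_mul, hpj]
    rw [hcast] at hCj
    have hMle : M j ^ m ≤ M 0 ^ (m - 1) * M p := by
      have := hpow m hm j
      rwa [hpj] at this
    have hMjm : (0:ℝ) < M j ^ m := pow_pos (hpos j) m
    have hstep1 : (n : ℝ) ^ p * A / ((j.factorial : ℝ) * M p) ≤
        M 0 ^ (m - 1) * ((n : ℝ) ^ p * A / ((j.factorial : ℝ) * M j ^ m)) := by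
      rw [mul_div_assoc']
      rw [div_le_div_iff₀ (mul_pos hfj hMp) (mul_pos hfj hMjm)]
      have hX : (0:ℝ) ≤ (j.factorial : ℝ) * ((n : ℝ) ^ p * A) := by positivity
      calc (n : ℝ) ^ p * A * ((j.factorial : ℝ) * M j ^ m)
          = (j.factorial : ℝ) * ((n : ℝ) ^ p * A) * M j ^ m := by ring
        _ ≤ (j.factorial : ℝ) * ((n : ℝ) ^ p * A) * (M 0 ^ (m - 1) * M p) :=
            mul_le_mul_of_nonneg_left hMle hX
        _ = M 0 ^ (m - 1) * ((n : ℝ) ^ p * A) * ((j.factorial : ℝ) * M p) := by ring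
    refine hstep1.trans ?_
    exact mul_le_mul_of_nonneg_left hCj (pow_nonneg (hpos 0).le _)
  · rw [if_neg hd]
    simp only [norm_zero, mul_zero, zero_div]
    exact mul_nonneg (pow_nonneg (hpos 0).le _) hC0
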